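/- arXiv:2007.04593 — 3 statements merged into one kernel-verified Lean document; each statement's English description precedes it below -/
import Mathlib

section
/- Let t > 0 and ξ₀ ∈ ℝⁿ. If the function ξ ↦ ⟨ξ₀, ξ⟩ e^{−t a_t(ξ)} is bounded on ℝⁿ, then ξ₀ belongs to S^⊥, the Euclidean orthogonal complement of S. (This is the Fourier-multiplier form of the statement that boundedness on L²(ℝⁿ) of ⟨ξ₀,∇_x⟩ e^{−tP} forces ξ₀ ∈ S^⊥, where e^{−tP} = e^{−t a_t(D_x)} e^{−t⟨Bx,∇_x⟩} and the transport factor is an invertible similitude of L².) -/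
open Matrix MeasureTheory

/-- The canonical Euclidean norm on `ℝⁿ`. -/
noncomputable def euclNorm {n : ℕ} (v : Fin n → ℝ) : ℝ := Real.sqrt (∑ i, v i ^ 2)

/-- The canonical Euclidean scalar product on `ℝⁿ`. -/
def euclInner {n : ℕ} (u v : Fin n → ℝ) : ℝ := ∑ i, u i * v i

/-- Membership in `S = ⋂_{j=0}^{n-1} Ker(√Q (Bᵀ)^j)`, where `sq` stands for `√Q`. -/
def memS (n : ℕ) (B sq : Matrix (Fin n) (Fin n) ℝ) (η : Fin n → ℝ) : Prop :=
  ∀ j < n, (sq * Bᵀ ^ j).mulVec η = 0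

/-- Membership in `S^⊥`, the Euclidean orthogonal complement of `S`. -/
def memSperp (n : ℕ) (B sq : Matrix (Fin n) (Fin n) ℝ) (ξ₀ : Fin n → ℝ) : Prop :=
  ∀ η : Fin n → ℝ, memS n B sq η → euclInner ξ₀ η = 0

/-- Membership in `V_k^⊥`, where `V_k = ⋂_{j=0}^{k} Ker(√Q (Bᵀ)^j)`. -/
def memVperp (n : ℕ) (B sq : Matrix (Fin n) (Fin n) ℝ) (k : ℕ) (ξ₀ : Fin n → ℝ) : Prop :=
  ∀ η : Fin n → ℝ, (∀ j ≤ k, (sq * Bᵀ ^ j).mulVec η = 0) → euclInner ξ₀ η = 0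

/-- The index `k_{ξ₀} = min {0 ≤ k ≤ r : ξ₀ ∈ V_k^⊥}` of a vector `ξ₀ ∈ S^⊥`. -/
noncomputable def kIndex (n : ℕ) (B sq : Matrix (Fin n) (Fin n) ℝ) (r : ℕ)
    (ξ₀ : Fin n → ℝ) : ℕ :=
  sInf {k | k ≤ r ∧ memVperp n B sq k ξ₀}

/-- `r` is the smallest integer such that `S = ⋂_{j=0}^{r} Ker(√Q (Bᵀ)^j)`. -/
def IsSmallestr (n : ℕ) (B sq : Matrix (Fin n) (Fin n) ℝ) (r : ℕ) : Prop :=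
  IsLeast {k | ∀ η : Fin n → ℝ,
    (∀ j ≤ k, (sq * Bᵀ ^ j).mulVec η = 0) ↔ memS n B sq η} r

open scoped ComplexOrder in
/-- The positive semidefinite square root of a positive semidefinite matrix
(the definition `Matrix.PosSemidef.sqrt` of the older Mathlib, removed since). -/
noncomputable def Matrix.PosSemidef.sqrt {n 𝕜 : Type*} [RCLike 𝕜] [Fintype n] [DecidableEq n]
    {A : Matrix n n 𝕜} (hA : A.PosSemidef) : Matrix n n 𝕜 :=
  hA.1.eigenvectorUnitary.1 * diagonal ((↑) ∘ (√·) ∘ hA.1.eigenvalues) *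
  (star hA.1.eigenvectorUnitary : Matrix n n 𝕜)

/-- The symbol `a_t(ξ) = (1/2) ∫₀¹ |√Q e^{α t Bᵀ} ξ|^{2s} dα`. -/
noncomputable def symb (n : ℕ) (B sq : Matrix (Fin n) (Fin n) ℝ) (s t : ℝ)
    (ξ : Fin n → ℝ) : ℝ :=
  (1 / 2) * ∫ α in (0:ℝ)..1, euclNorm ((sq * NormedSpace.exp ((α * t) • Bᵀ)).mulVec ξ) ^ (2 * s)

/-- `A ↦ A.mulVec v` as a linear map in the matrix `A`. -/
def mvL {n : ℕ} (v : Fin n → ℝ) : Matrix (Fin n) (Fin n) ℝ →ₗ[ℝ] (Fin n → ℝ) where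
  toFun A := A.mulVec v
  map_add' A B := Matrix.add_mulVec A B v
  map_smul' r A := Matrix.smul_mulVec r A v

/-- Cayley–Hamilton extension: if `sq * M^j v = 0` for all `j < n`, then for all `k`. -/
lemma aux_pow_mulVec_eq_zero {n : ℕ} (M sq : Matrix (Fin n) (Fin n) ℝ) (v : Fin n → ℝ)
    (h : ∀ j < n, (sq * M ^ j).mulVec v = 0) : ∀ k, (sq * M ^ k).mulVec v = 0 := by
  intro k
  induction k using Nat.strong_induction_on with
  | _ k ih =>
  rcases lt_or_ge k n with hk | hk
  · exact h k hk
  · have hd : M.charpoly.natDegree = n := by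
      simpa [Fintype.card_fin] using M.charpoly_natDegree_eq_dim
    have h0 : (0 : Matrix (Fin n) (Fin n) ℝ)
        = ∑ i ∈ Finset.range (n + 1), M.charpoly.coeff i • M ^ i := by
      rw [← Polynomial.aeval_eq_sum_range' (by omega : M.charpoly.natDegree < n + 1)]
      rw [M.aeval_self_charpoly]
    have hc : M.charpoly.coeff n = 1 := by
      have := M.charpoly_monic.coeff_natDegree
      rwa [hd] at this
    rw [Finset.sum_range_succ, hc, one_smul] at h0
    have hMn : M ^ n = -∑ i ∈ Finset.range n, M.charpoly.coeff i • M ^ i :=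
      eq_neg_of_add_eq_zero_right h0.symm
    have hk' : M ^ k = M ^ (k - n) * M ^ n := by rw [← pow_add]; congr 1; omega
    have hsplit : sq * M ^ k
        = -∑ i ∈ Finset.range n, M.charpoly.coeff i • (sq * M ^ (k - n + i)) := by
      rw [hk', hMn, mul_neg, Finset.mul_sum, mul_neg, Finset.mul_sum]
      congr 1
      refine Finset.sum_congr rfl fun i hi => ?_
      rw [mul_smul_comm, mul_smul_comm, pow_add]
    have hrepr : (sq * M ^ k) *ᵥ v = mvL v (sq * M ^ k) := rfl
    rw [hrepr, hsplit, map_neg, map_sum]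
    have hz : ∀ i ∈ Finset.range n,
        mvL v (M.charpoly.coeff i • (sq * M ^ (k - n + i))) = 0 := by
      intro i hi
      rw [_root_.map_smul]
      have : mvL v (sq * M ^ (k - n + i)) = (sq * M ^ (k - n + i)) *ᵥ v := rfl
      rw [this, ih (k - n + i) (by simp only [Finset.mem_range] at hi; omega), smul_zero]
    rw [Finset.sum_eq_zero hz, neg_zero]

/-- If `sq * M^k v = 0` for all `k`, then `sq * exp(c • M) v = 0`. -/
lemma aux_exp_mulVec_eq_zero {n : ℕ} (M sq : Matrix (Fin n) (Fin n) ℝ) (v : Fin n → ℝ)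
    (h : ∀ k, (sq * M ^ k).mulVec v = 0) (c : ℝ) :
    (sq * NormedSpace.exp (c • M)).mulVec v = 0 := by
  letI : SeminormedRing (Matrix (Fin n) (Fin n) ℝ) := Matrix.linftyOpSemiNormedRing
  letI : NormedRing (Matrix (Fin n) (Fin n) ℝ) := Matrix.linftyOpNormedRing
  letI : NormedAlgebra ℝ (Matrix (Fin n) (Fin n) ℝ) := Matrix.linftyOpNormedAlgebra
  let L : Matrix (Fin n) (Fin n) ℝ →ₗ[ℝ] (Fin n → ℝ) :=
    (mvL v).comp (LinearMap.mulLeft ℝ sq)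
  let Lc := LinearMap.toContinuousLinearMap L
  have hsum := NormedSpace.exp_series_hasSum_exp' (𝕂 := ℝ) (c • M)
  have h2 := hsum.mapL Lc
  have h3 : ∀ k : ℕ, Lc (((k.factorial : ℝ))⁻¹ • (c • M) ^ k) = 0 := by
    intro k
    have hLk : Lc (M ^ k) = 0 := h k
    rw [_root_.map_smul, smul_pow, _root_.map_smul, hLk, smul_zero, smul_zero]
  simp only [h3] at h2
  have h0 : Lc (NormedSpace.exp (c • M)) = 0 := h2.unique hasSum_zero
  exact h0

/-- If the function `ξ ↦ ⟨ξ₀, ξ⟩ e^{−t a_t(ξ)}` is bounded on `ℝⁿ` for some `t > 0`,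
then `ξ₀ ∈ S^⊥`. -/
theorem statement4 (n : ℕ) (hn : 1 ≤ n) (s : ℝ) (hs : 0 < s)
    (B Q : Matrix (Fin n) (Fin n) ℝ) (hQ : Q.PosSemidef)
    (t : ℝ) (ht : 0 < t) (ξ₀ : Fin n → ℝ)
    (hbdd : ∃ C : ℝ, ∀ ξ : Fin n → ℝ,
      |euclInner ξ₀ ξ| * Real.exp (-(t * symb n B hQ.sqrt s t ξ)) ≤ C) :
    memSperp n B hQ.sqrt ξ₀ := by
  obtain ⟨C, hC⟩ := hbdd
  intro η hη
  by_contra hne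
  have hall : ∀ k, (hQ.sqrt * Bᵀ ^ k).mulVec η = 0 :=
    aux_pow_mulVec_eq_zero Bᵀ hQ.sqrt η hη
  have hsymb : ∀ l : ℝ, symb n B hQ.sqrt s t (l • η) = 0 := by
    intro l
    have hz : ∀ α : ℝ,
        euclNorm ((hQ.sqrt * NormedSpace.exp ((α * t) • Bᵀ)).mulVec (l • η)) ^ (2 * s) = 0 := by
      intro α
      have hzero : (hQ.sqrt * NormedSpace.exp ((α * t) • Bᵀ)).mulVec (l • η) = 0 := by
        rw [Matrix.mulVec_smul, aux_exp_mulVec_eq_zero Bᵀ hQ.sqrt η hall (α * t), smul_zero]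
      rw [hzero]
      have h0 : euclNorm (0 : Fin n → ℝ) = 0 := by simp [euclNorm]
      rw [h0, Real.zero_rpow (by positivity)]
    unfold symb
    rw [show (fun α : ℝ =>
        euclNorm ((hQ.sqrt * NormedSpace.exp ((α * t) • Bᵀ)).mulVec (l • η)) ^ (2 * s))
        = fun _ : ℝ => (0 : ℝ) from funext hz]
    simp
  have key : ∀ l : ℝ, |l| * |euclInner ξ₀ η| ≤ C := by
    intro l
    have h1 := hC (l • η)
    rw [hsymb l] at h1
    simp only [mul_zero, neg_zero, Real.exp_zero, mul_one] at h1
    have hin : euclInner ξ₀ (l • η) = l * euclInner ξ₀ η := by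
      unfold euclInner
      rw [Finset.mul_sum]
      refine Finset.sum_congr rfl fun i _ => ?_
      simp [Pi.smul_apply, smul_eq_mul]; ring
    rw [hin, abs_mul] at h1
    exact h1
  have hepos : 0 < |euclInner ξ₀ η| := abs_pos.mpr hne
  have h1 := key ((|C| + 1) / |euclInner ξ₀ η|)
  rw [abs_of_nonneg (by positivity), div_mul_cancel₀ _ (ne_of_gt hepos)] at h1
  have := le_abs_self C
  linarith
end

section
/- For every real s > 0 there exists a constant c > 1 such that for all multi-indices α, β ∈ ℕⁿ, every t > 0 and every (ξ, η) ∈ ℝⁿ×ℝⁿ, (∏_{i=1}^n |ξ_i|^{α_i}) (∏_{i=1}^n |η_i|^{β_i}) · exp(−t ∫₀¹ |η + θ t ξ|^{2s} dθ) ≤ c^{|α|+|β|} · t^{−(1+1/(2s))|α| − |β|/(2s)} · (α!)^{1/(2s)} (β!)^{1/(2s)}. (This is the pointwise symbol form of the smoothing estimate ‖∂_x^α ∂_v^β e^{−tK} u‖_{L²(ℝ^{2n})} ≤ c^{|α|+|β|} t^{−(1+1/(2s))|α| − |β|/(2s)} (α!)^{1/(2s)} (β!)^{1/(2s)} ‖u‖_{L²}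 for the semigroup generated by the fractional Kolmogorov operator K = (−Δ_v)^s + v·∇_x on ℝ^{2n}.) -/
open Matrix MeasureTheory

open Real in
lemma rpow_mul_exp_le {z b : ℝ} (hz : 0 ≤ z) (hb : 0 ≤ b) :
    z ^ b * Real.exp (-z) ≤ b ^ b := by
  rcases eq_or_lt_of_le hb with hb0 | hb0
  · rw [← hb0, rpow_zero, rpow_zero, one_mul]
    exact Real.exp_le_one_iff.mpr (neg_nonpos.mpr hz)
  rcases eq_or_lt_of_le hz with hz0 | hz0
  · rw [← hz0, Real.zero_rpow hb0.ne', zero_mul]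
    positivity
  have h1 : Real.log (z / b) ≤ z / b - 1 := Real.log_le_sub_one_of_pos (by positivity)
  rw [Real.log_div hz0.ne' hb0.ne'] at h1
  have h2 : b * Real.log z - z ≤ b * Real.log b := by nlinarith [mul_le_mul_of_nonneg_left h1 hb, mul_div_cancel₀ z hb0.ne']
  calc z ^ b * Real.exp (-z) = Real.exp (b * Real.log z - z) := by
        rw [Real.rpow_def_of_pos hz0, ← Real.exp_add, mul_comm (Real.log z) b]; ring_nf
    _ ≤ Real.exp (b * Real.log b) := Real.exp_le_exp.mpr h2
    _ = b ^ b := by rw [Real.rpow_def_of_pos hb0, mul_comm]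

lemma nat_pow_le_exp_mul_factorial (a : ℕ) : (a : ℝ) ^ a ≤ Real.exp a * a.factorial := by
  have h := Real.sum_le_exp_of_nonneg (x := (a:ℝ)) (Nat.cast_nonneg a) (a + 1)
  have h2 : (a:ℝ) ^ a / a.factorial ≤ Real.exp a := by
    refine le_trans ?_ h
    exact Finset.single_le_sum (f := fun i => (a:ℝ)^i / i.factorial)
      (fun i _ => by positivity) (Finset.self_mem_range_succ a)
  have hf : (0:ℝ) < a.factorial := by positivity
  calc (a:ℝ)^a = ((a:ℝ)^a / a.factorial) * a.factorial := by field_simp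
    _ ≤ Real.exp a * a.factorial := by exact mul_le_mul_of_nonneg_right h2 hf.le

noncomputable def Dconst (s : ℝ) : ℝ := max 1 ((Real.exp 1 / (2*s)) ^ (1/(2*s)))

lemma one_le_Dconst (s : ℝ) : 1 ≤ Dconst s := le_max_left _ _

lemma self_rpow_le {s : ℝ} (hs : 0 < s) (a : ℕ) :
    ((a:ℝ)/(2*s)) ^ ((a:ℝ)/(2*s)) ≤ (Dconst s) ^ a * ((a.factorial : ℝ)) ^ (1/(2*s)) := by
  have h2s : (0:ℝ) < 2*s := by linarith
  have ha : (0:ℝ) ≤ a := Nat.cast_nonneg a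
  have e1 : ((a:ℝ)/(2*s)) ^ ((a:ℝ)/(2*s))
      = (a:ℝ) ^ ((a:ℝ)/(2*s)) / (2*s) ^ ((a:ℝ)/(2*s)) :=
    Real.div_rpow ha h2s.le _
  have e2 : (a:ℝ) ^ ((a:ℝ)/(2*s)) = ((a:ℝ) ^ a) ^ (1/(2*s)) := by
    rw [← Real.rpow_natCast (a:ℝ) a, ← Real.rpow_mul ha]
    ring_nf
  have e3 : ((a:ℝ) ^ a) ^ (1/(2*s)) ≤ (Real.exp a * a.factorial) ^ (1/(2*s)) :=
    Real.rpow_le_rpow (by positivity) (nat_pow_le_exp_mul_factorial a) (by positivity)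
  have e4 : (Real.exp a * a.factorial) ^ (1/(2*s))
      = Real.exp ((a:ℝ)/(2*s)) * ((a.factorial : ℝ)) ^ (1/(2*s)) := by
    rw [Real.mul_rpow (Real.exp_nonneg _) (by positivity), ← Real.exp_one_rpow (a:ℝ),
      ← Real.rpow_mul (Real.exp_nonneg 1), Real.exp_one_rpow]
    ring_nf
  have e5 : Real.exp ((a:ℝ)/(2*s)) / (2*s) ^ ((a:ℝ)/(2*s))
      = (Real.exp 1 / (2*s)) ^ ((a:ℝ)/(2*s)) := by
    rw [Real.div_rpow (Real.exp_nonneg 1) h2s.le, Real.exp_one_rpow]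
  have e6 : (Real.exp 1 / (2*s)) ^ ((a:ℝ)/(2*s)) ≤ (Dconst s) ^ a := by
    have : (Real.exp 1 / (2*s)) ^ ((a:ℝ)/(2*s))
        = ((Real.exp 1 / (2*s)) ^ (1/(2*s))) ^ a := by
      rw [← Real.rpow_natCast ((Real.exp 1 / (2*s)) ^ (1/(2*s))) a,
        ← Real.rpow_mul (by positivity)]
      ring_nf
    rw [this]
    exact pow_le_pow_left₀ (by positivity) (le_max_right _ _) a
  have hpow : (0:ℝ) < (2*s) ^ ((a:ℝ)/(2*s)) := Real.rpow_pos_of_pos h2s _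
  calc ((a:ℝ)/(2*s)) ^ ((a:ℝ)/(2*s))
      = (a:ℝ) ^ ((a:ℝ)/(2*s)) / (2*s) ^ ((a:ℝ)/(2*s)) := e1
    _ ≤ (Real.exp ((a:ℝ)/(2*s)) * ((a.factorial : ℝ)) ^ (1/(2*s))) / (2*s) ^ ((a:ℝ)/(2*s)) := by
        rw [e2]; gcongr; exact e3.trans_eq e4
    _ = (Real.exp 1 / (2*s)) ^ ((a:ℝ)/(2*s)) * ((a.factorial : ℝ)) ^ (1/(2*s)) := by
        rw [← e5]; ring
    _ ≤ (Dconst s) ^ a * ((a.factorial : ℝ)) ^ (1/(2*s)) := by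
        exact mul_le_mul_of_nonneg_right e6 (by positivity)

open Real in
lemma coord_bound {s : ℝ} (hs : 0 < s) {μ y : ℝ} (hμ : 0 < μ) (hy : 0 ≤ y) (a : ℕ) :
    y ^ a * Real.exp (-(μ * y ^ (2*s))) ≤ μ ^ (-((a:ℝ)/(2*s))) * ((a:ℝ)/(2*s)) ^ ((a:ℝ)/(2*s)) := by
  have h2s : (0:ℝ) < 2*s := by linarith
  set b : ℝ := (a:ℝ)/(2*s) with hbdef
  have hb : 0 ≤ b := by positivity
  set z : ℝ := μ * y ^ (2*s) with hzdef
  have hz : 0 ≤ z := by positivity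
  have hy2s : y ^ (2*s) = z / μ := by rw [hzdef, mul_div_cancel_left₀ _ hμ.ne']
  have e1 : y ^ a = z ^ b * μ ^ (-b) := by
    have : y ^ a = (y ^ (2*s)) ^ b := by
      rw [← Real.rpow_natCast y a, ← Real.rpow_mul hy]
      congr 1
      rw [hbdef, mul_div_assoc', mul_div_cancel_left₀ _ h2s.ne']
    rw [this, hy2s, Real.div_rpow hz hμ.le, Real.rpow_neg hμ.le, div_eq_mul_inv]
  calc y ^ a * Real.exp (-(μ * y ^ (2*s)))
      = μ ^ (-b) * (z ^ b * Real.exp (-z)) := by rw [e1, ← hzdef]; ring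
    _ ≤ μ ^ (-b) * b ^ b := by
        exact mul_le_mul_of_nonneg_left (rpow_mul_exp_le hz hb) (by positivity)

open Real in
lemma enorm_nonneg' {n : ℕ} (v : Fin n → ℝ) : 0 ≤ euclNorm v := Real.sqrt_nonneg _

lemma abs_le_enorm {n : ℕ} (v : Fin n → ℝ) (i : Fin n) : |v i| ≤ euclNorm v := by
  rw [← Real.sqrt_sq_eq_abs]
  exact Real.sqrt_le_sqrt (Finset.single_le_sum (f := fun j => v j ^ 2)
    (fun j _ => sq_nonneg _) (Finset.mem_univ i))

lemma prodExp {n : ℕ} {s : ℝ} (hs : 0 < s) (hn : 0 < n) {ν : ℝ} (hν : 0 < ν)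
    (α : Fin n → ℕ) (ξ : Fin n → ℝ) :
    (∏ i, |ξ i| ^ α i) * Real.exp (-(ν * euclNorm ξ ^ (2*s))) ≤
      ((ν/n) ^ (-(1/(2*s)))) ^ (∑ i, α i) * (Dconst s) ^ (∑ i, α i) *
        (∏ i, ((α i).factorial : ℝ)) ^ (1/(2*s)) := by
  have h2s : (0:ℝ) < 2*s := by linarith
  have hνn : (0:ℝ) < ν / n := by positivity
  have hsum : ∑ i : Fin n, (ν/n * |ξ i| ^ (2*s)) ≤ ν * euclNorm ξ ^ (2*s) := by
    calc ∑ i : Fin n, (ν/n * |ξ i| ^ (2*s)) ≤ ∑ _i : Fin n, (ν/n * euclNorm ξ ^ (2*s)) := by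
          refine Finset.sum_le_sum fun i _ => ?_
          exact mul_le_mul_of_nonneg_left
            (Real.rpow_le_rpow (abs_nonneg _) (abs_le_enorm ξ i) h2s.le) hνn.le
      _ = ν * euclNorm ξ ^ (2*s) := by
          rw [Finset.sum_const, Finset.card_univ, Fintype.card_fin, nsmul_eq_mul]
          field_simp
  have hexp : Real.exp (-(ν * euclNorm ξ ^ (2*s))) ≤
      ∏ i, Real.exp (-(ν/n * |ξ i| ^ (2*s))) := by
    rw [← Real.exp_sum]
    apply Real.exp_le_exp.mpr
    rw [Finset.sum_neg_distrib]
    linarith [hsum]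
  calc (∏ i, |ξ i| ^ α i) * Real.exp (-(ν * euclNorm ξ ^ (2*s)))
      ≤ (∏ i, |ξ i| ^ α i) * ∏ i, Real.exp (-(ν/n * |ξ i| ^ (2*s))) := by
        exact mul_le_mul_of_nonneg_left hexp (Finset.prod_nonneg fun i _ => by positivity)
    _ = ∏ i, (|ξ i| ^ α i * Real.exp (-(ν/n * |ξ i| ^ (2*s)))) := by
        rw [Finset.prod_mul_distrib]
    _ ≤ ∏ i, ((ν/n) ^ (-((α i:ℝ)/(2*s))) * (((α i:ℝ))/(2*s)) ^ (((α i:ℝ))/(2*s))) := by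
        refine Finset.prod_le_prod (fun i _ => by positivity) fun i _ =>
          coord_bound hs hνn (abs_nonneg _) (α i)
    _ ≤ ∏ i, ((ν/n) ^ (-((α i:ℝ)/(2*s))) * ((Dconst s) ^ (α i) * (((α i).factorial : ℝ)) ^ (1/(2*s)))) := by
        refine Finset.prod_le_prod (fun i _ => by positivity) fun i _ =>
          mul_le_mul_of_nonneg_left (self_rpow_le hs (α i)) (by positivity)
    _ = (∏ i, (ν/n) ^ (-((α i:ℝ)/(2*s)))) * (∏ i, (Dconst s) ^ (α i)) *
          (∏ i, (((α i).factorial : ℝ)) ^ (1/(2*s))) := by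
        rw [Finset.prod_mul_distrib, Finset.prod_mul_distrib]; ring
    _ = ((ν/n) ^ (-(1/(2*s)))) ^ (∑ i, α i) * (Dconst s) ^ (∑ i, α i) *
          (∏ i, ((α i).factorial : ℝ)) ^ (1/(2*s)) := by
        congr 1
        · congr 1
          · rw [← Finset.prod_pow_eq_pow_sum]
            refine Finset.prod_congr rfl fun i _ => ?_
            rw [← Real.rpow_natCast ((ν/n) ^ (-(1/(2*s)))) (α i), ← Real.rpow_mul hνn.le]
            congr 1; ring
          · rw [Finset.prod_pow_eq_pow_sum]
        · rw [Real.finset_prod_rpow _ _ (fun i _ => by positivity)]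

open Real in
lemma integral_piece {f : ℝ → ℝ} (hf : Continuous f) (hpos : ∀ x, 0 ≤ f x)
    {p q : ℝ} (h0 : 0 ≤ p) (hpq : p ≤ q) (hq : q ≤ 1) {C : ℝ} (hC : 0 ≤ C)
    (hbound : ∀ θ ∈ Set.Icc p q, C ≤ f θ) :
    (q - p) * C ≤ ∫ θ in (0:ℝ)..1, f θ := by
  have i1 : IntervalIntegrable f MeasureTheory.volume 0 p := hf.intervalIntegrable _ _
  have i2 : IntervalIntegrable f MeasureTheory.volume p q := hf.intervalIntegrable _ _
  have i3 : IntervalIntegrable f MeasureTheory.volume q 1 := hf.intervalIntegrable _ _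
  have hsplit : (∫ θ in (0:ℝ)..p, f θ) + (∫ θ in p..q, f θ) + (∫ θ in q..1, f θ)
      = ∫ θ in (0:ℝ)..1, f θ := by
    rw [intervalIntegral.integral_add_adjacent_intervals i1 i2]
    exact intervalIntegral.integral_add_adjacent_intervals
      (hf.intervalIntegrable _ _) i3
  have n1 : 0 ≤ ∫ θ in (0:ℝ)..p, f θ :=
    intervalIntegral.integral_nonneg h0 (fun u _ => hpos u)
  have n3 : 0 ≤ ∫ θ in q..1, f θ :=
    intervalIntegral.integral_nonneg hq (fun u _ => hpos u)
  have n2 : (q - p) * C ≤ ∫ θ in p..q, f θ := by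
    have := intervalIntegral.integral_mono_on (f := fun _ => C) (g := f) hpq
      (intervalIntegrable_const) i2 hbound
    rwa [intervalIntegral.integral_const, smul_eq_mul] at this
  linarith

lemma key_lower {s : ℝ} (hs : 0 < s) {F : Type*} [NormedAddCommGroup F]
    [InnerProductSpace ℝ F] (u w : F) :
    (1/(8 * (4:ℝ) ^ (2*s))) * (‖u‖ ^ (2*s) + ‖w‖ ^ (2*s)) ≤
      ∫ θ in (0:ℝ)..1, ‖u + θ • w‖ ^ (2*s) := by
  have h2s : (0:ℝ) < 2*s := by linarith
  set A : ℝ := (4:ℝ) ^ (2*s) with hA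
  have hA1 : (1:ℝ) ≤ A := Real.one_le_rpow (by norm_num) h2s.le
  have hA0 : (0:ℝ) < A := by linarith
  have h2A : (2:ℝ) ^ (2*s) ≤ A := Real.rpow_le_rpow (by norm_num) (by norm_num) h2s.le
  have hfc : Continuous fun θ : ℝ => ‖u + θ • w‖ ^ (2*s) := by
    have h1 : Continuous fun θ : ℝ => ‖u + θ • w‖ :=
      ((continuous_const.add (continuous_id.smul continuous_const))).norm
    have h2 : Continuous fun x : ℝ => x ^ (2*s) :=
      continuous_iff_continuousAt.mpr fun x =>
        Real.continuousAt_rpow_const x _ (Or.inr h2s.le)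
    exact h2.comp h1
  have hfpos : ∀ θ : ℝ, 0 ≤ ‖u + θ • w‖ ^ (2*s) := fun θ => by positivity
  rcases le_or_gt ‖w‖ ‖u‖ with hcase | hcase
  · -- Case A : on [0, 1/2], ‖u + θw‖ ≥ ‖u‖/2
    have hb : ∀ θ ∈ Set.Icc (0:ℝ) (1/2), (‖u‖/2) ^ (2*s) ≤ ‖u + θ • w‖ ^ (2*s) := by
      rintro θ ⟨hθ0, hθ1⟩
      refine Real.rpow_le_rpow (by positivity) ?_ h2s.le
      have : ‖u‖ ≤ ‖u + θ • w‖ + ‖θ • w‖ := by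
        have h := norm_sub_le (u + θ • w) (θ • w)
        simpa using h
      rw [norm_smul, Real.norm_eq_abs, abs_of_nonneg hθ0] at this
      nlinarith [norm_nonneg w, norm_nonneg u]
    have hp := integral_piece hfc hfpos (p := 0) (q := 1/2) le_rfl (by norm_num)
      (by norm_num) (by positivity) hb
    have e1 : (‖u‖/2) ^ (2*s) = ‖u‖ ^ (2*s) / 2 ^ (2*s) :=
      Real.div_rpow (norm_nonneg u) (by norm_num) _
    have hw : ‖w‖ ^ (2*s) ≤ ‖u‖ ^ (2*s) := Real.rpow_le_rpow (norm_nonneg w) hcase h2s.le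
    have h2pos : (0:ℝ) < (2:ℝ) ^ (2*s) := Real.rpow_pos_of_pos (by norm_num) _
    have hup : (0:ℝ) ≤ ‖u‖ ^ (2*s) := by positivity
    refine le_trans ?_ hp
    rw [e1]
    calc (1/(8*A)) * (‖u‖ ^ (2*s) + ‖w‖ ^ (2*s))
        ≤ (1/(8*A)) * (2 * ‖u‖ ^ (2*s)) := by
          apply mul_le_mul_of_nonneg_left (by linarith) (by positivity)
      _ = ‖u‖ ^ (2*s) / (4*A) := by ring
      _ ≤ ‖u‖ ^ (2*s) / (2 * 2 ^ (2*s)) := by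
          rw [div_le_div_iff₀ (by positivity) (by positivity)]
          nlinarith
      _ = (1/2 - 0) * (‖u‖ ^ (2*s) / 2 ^ (2*s)) := by ring
  · -- Case B : ‖u‖ < ‖w‖, use projection on w
    have hw0 : (0:ℝ) < ‖w‖ := lt_of_le_of_lt (norm_nonneg u) hcase
    set c : ℝ := inner ℝ u w / ‖w‖ with hc
    have hproj : ∀ θ : ℝ, |c + θ * ‖w‖| ≤ ‖u + θ • w‖ := by
      intro θ
      have h := abs_real_inner_le_norm (u + θ • w) w
      rw [inner_add_left, real_inner_smul_left, real_inner_self_eq_norm_mul_norm] at h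
      have e : (c + θ * ‖w‖) * ‖w‖ = inner ℝ u w + θ * (‖w‖ * ‖w‖) := by
        rw [hc, add_mul, div_mul_cancel₀ _ hw0.ne']; ring
      have : |c + θ * ‖w‖| * ‖w‖ ≤ ‖u + θ • w‖ * ‖w‖ := by
        have h2 : |(c + θ * ‖w‖) * ‖w‖| ≤ ‖u + θ • w‖ * ‖w‖ := by rw [e]; exact h
        rwa [abs_mul, abs_of_pos hw0] at h2
      exact le_of_mul_le_mul_right this hw0
    have hWY : ‖u‖ ^ (2*s) ≤ ‖w‖ ^ (2*s) := Real.rpow_le_rpow (norm_nonneg u) hcase.le h2s.le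
    have e1 : (‖w‖/4) ^ (2*s) = ‖w‖ ^ (2*s) / A :=
      Real.div_rpow (norm_nonneg w) (by norm_num) _
    have final : (1/4 : ℝ) * (‖w‖/4) ^ (2*s) = ‖w‖ ^ (2*s)/(4*A) := by rw [e1]; ring
    have goal_arith : (1/(8*A)) * (‖u‖ ^ (2*s) + ‖w‖ ^ (2*s)) ≤ ‖w‖ ^ (2*s)/(4*A) := by
      rw [div_mul_eq_mul_div, one_mul, div_le_div_iff₀ (by positivity) (by positivity)]
      nlinarith [hWY, hA0]
    rcases le_or_gt (-(‖w‖/2)) c with hsub | hsub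
    · have hb : ∀ θ ∈ Set.Icc (3/4 : ℝ) 1, (‖w‖/4) ^ (2*s) ≤ ‖u + θ • w‖ ^ (2*s) := by
        rintro θ ⟨hθ0, hθ1⟩
        refine Real.rpow_le_rpow (by positivity) ?_ h2s.le
        refine le_trans ?_ (hproj θ)
        refine le_trans ?_ (le_abs_self _)
        nlinarith
      have hp := integral_piece hfc hfpos (p := 3/4) (q := 1) (by norm_num) (by norm_num)
        le_rfl (by positivity) hb
      refine le_trans (goal_arith.trans ?_) hp
      rw [← final]; norm_num
    · have hb : ∀ θ ∈ Set.Icc (0 : ℝ) (1/4), (‖w‖/4) ^ (2*s) ≤ ‖u + θ • w‖ ^ (2*s) := by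
        rintro θ ⟨hθ0, hθ1⟩
        refine Real.rpow_le_rpow (by positivity) ?_ h2s.le
        refine le_trans ?_ (hproj θ)
        refine le_trans ?_ (neg_le_abs _)
        nlinarith
      have hp := integral_piece hfc hfpos (p := 0) (q := 1/4) le_rfl (by norm_num)
        (by norm_num) (by positivity) hb
      refine le_trans (goal_arith.trans ?_) hp
      rw [← final]; norm_num

lemma enorm_eq {n : ℕ} (v : Fin n → ℝ) :
    euclNorm v = ‖(WithLp.equiv 2 (Fin n → ℝ)).symm v‖ := by
  rw [EuclideanSpace.norm_eq]
  unfold euclNorm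
  congr 1
  refine Finset.sum_congr rfl fun i _ => ?_
  rw [WithLp.equiv_symm_apply, PiLp.toLp_apply, Real.norm_eq_abs, sq_abs]

lemma enorm_smul' {n : ℕ} (t : ℝ) (v : Fin n → ℝ) : euclNorm (t • v) = |t| * euclNorm v := by
  rw [enorm_eq, enorm_eq, WithLp.equiv_symm_apply, WithLp.toLp_smul, norm_smul, Real.norm_eq_abs]

/-- Pointwise symbol form of the smoothing estimate for the semigroup generated by the
fractional Kolmogorov operator `K = (−Δ_v)^s + v·∇ₓ` on `ℝ^{2n}`. -/
theorem statement10 (n : ℕ) (hn : 1 ≤ n) (s : ℝ) (hs : 0 < s) :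
    ∃ c : ℝ, 1 < c ∧
      ∀ α β : Fin n → ℕ, ∀ t : ℝ, 0 < t → ∀ ξ η : Fin n → ℝ,
        (∏ i, |ξ i| ^ α i) * (∏ i, |η i| ^ β i) *
            Real.exp (-(t * ∫ θ in (0:ℝ)..1, euclNorm (η + (θ * t) • ξ) ^ (2 * s))) ≤
          c ^ (∑ i, α i + ∑ i, β i) *
            t ^ (-((1 + 1 / (2 * s)) * (∑ i, α i : ℕ) + (∑ i, β i : ℕ) / (2 * s))) *
            (∏ i, ((α i).factorial : ℝ)) ^ (1 / (2 * s)) *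
            (∏ i, ((β i).factorial : ℝ)) ^ (1 / (2 * s)) := by
  have h2s : (0:ℝ) < 2*s := by linarith
  have hn0 : (0:ℝ) < n := by exact_mod_cast hn
  set κ : ℝ := 1/(8*(4:ℝ)^(2*s)) with hκdef
  have hκ : 0 < κ := by positivity
  set E₀ : ℝ := (κ/n) ^ (-(1/(2*s))) with hE₀def
  have hE₀ : 0 < E₀ := Real.rpow_pos_of_pos (by positivity) _
  have hD : (0:ℝ) < Dconst s := lt_of_lt_of_le one_pos (one_le_Dconst s)
  refine ⟨max 2 (E₀ * Dconst s), lt_of_lt_of_le one_lt_two (le_max_left _ _), ?_⟩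
  intro α β t ht ξ η
  set c : ℝ := max 2 (E₀ * Dconst s) with hcdef
  set N : ℕ := ∑ i, α i with hN
  set M : ℕ := ∑ i, β i with hM
  -- Step 1: lower bound on the integral
  have hint : κ * (euclNorm η ^ (2*s) + (t * euclNorm ξ) ^ (2*s)) ≤
      ∫ θ in (0:ℝ)..1, euclNorm (η + (θ * t) • ξ) ^ (2*s) := by
    have h := key_lower hs ((WithLp.equiv 2 (Fin n → ℝ)).symm η)
      ((WithLp.equiv 2 (Fin n → ℝ)).symm (t • ξ))
    have hie : ∀ θ : ℝ, ‖(WithLp.equiv 2 (Fin n → ℝ)).symm η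
        + θ • (WithLp.equiv 2 (Fin n → ℝ)).symm (t • ξ)‖ = euclNorm (η + (θ * t) • ξ) := by
      intro θ
      rw [enorm_eq, ← smul_smul]; rfl
    have hiu : ‖(WithLp.equiv 2 (Fin n → ℝ)).symm η‖ = euclNorm η := (enorm_eq η).symm
    have hiw : ‖(WithLp.equiv 2 (Fin n → ℝ)).symm (t • ξ)‖ = t * euclNorm ξ := by
      rw [← enorm_eq, enorm_smul', abs_of_pos ht]
    rw [hiu, hiw] at h
    refine le_trans h (le_of_eq ?_)
    exact intervalIntegral.integral_congr fun θ _ => by rw [hie θ]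
  -- Step 2: bound on the exponential
  have hX : (0:ℝ) ≤ euclNorm ξ ^ (2*s) := Real.rpow_nonneg (enorm_nonneg' ξ) _
  have hY : (0:ℝ) ≤ euclNorm η ^ (2*s) := Real.rpow_nonneg (enorm_nonneg' η) _
  set ν₁ : ℝ := κ * t ^ ((1:ℝ)+2*s) with hν₁def
  set ν₂ : ℝ := κ * t with hν₂def
  have hν₁ : 0 < ν₁ := by
    have := Real.rpow_pos_of_pos ht ((1:ℝ)+2*s); positivity
  have hν₂ : 0 < ν₂ := by positivity
  have hexp : Real.exp (-(t * ∫ θ in (0:ℝ)..1, euclNorm (η + (θ * t) • ξ) ^ (2*s))) ≤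
      Real.exp (-(ν₁ * euclNorm ξ ^ (2*s))) * Real.exp (-(ν₂ * euclNorm η ^ (2*s))) := by
    rw [← Real.exp_add]
    apply Real.exp_le_exp.mpr
    have h1 := mul_le_mul_of_nonneg_left hint ht.le
    have expand : t * (κ * (euclNorm η ^ (2*s) + (t * euclNorm ξ) ^ (2*s)))
        = ν₁ * euclNorm ξ ^ (2*s) + ν₂ * euclNorm η ^ (2*s) := by
      rw [Real.mul_rpow ht.le (enorm_nonneg' ξ), hν₁def, hν₂def,
        Real.rpow_add ht 1 (2*s), Real.rpow_one]
      ring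
    rw [expand] at h1
    linarith
  -- Step 3: apply prodExp twice
  have hnn : 0 < n := hn
  have P1 := prodExp hs hnn hν₁ α ξ
  have P2 := prodExp hs hnn hν₂ β η
  -- Step 4: combine
  have hPξ : (0:ℝ) ≤ ∏ i, |ξ i| ^ α i := Finset.prod_nonneg fun i _ => by positivity
  have hPη : (0:ℝ) ≤ ∏ i, |η i| ^ β i := Finset.prod_nonneg fun i _ => by positivity
  have step4 : (∏ i, |ξ i| ^ α i) * (∏ i, |η i| ^ β i) *
      Real.exp (-(t * ∫ θ in (0:ℝ)..1, euclNorm (η + (θ * t) • ξ) ^ (2*s))) ≤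
      (((ν₁/n) ^ (-(1/(2*s)))) ^ N * (Dconst s) ^ N * (∏ i, ((α i).factorial : ℝ)) ^ (1/(2*s))) *
      (((ν₂/n) ^ (-(1/(2*s)))) ^ M * (Dconst s) ^ M * (∏ i, ((β i).factorial : ℝ)) ^ (1/(2*s))) := by
    calc (∏ i, |ξ i| ^ α i) * (∏ i, |η i| ^ β i) *
        Real.exp (-(t * ∫ θ in (0:ℝ)..1, euclNorm (η + (θ * t) • ξ) ^ (2*s)))
        ≤ (∏ i, |ξ i| ^ α i) * (∏ i, |η i| ^ β i) *
          (Real.exp (-(ν₁ * euclNorm ξ ^ (2*s))) * Real.exp (-(ν₂ * euclNorm η ^ (2*s)))) := by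
          exact mul_le_mul_of_nonneg_left hexp (by positivity)
      _ = ((∏ i, |ξ i| ^ α i) * Real.exp (-(ν₁ * euclNorm ξ ^ (2*s)))) *
          ((∏ i, |η i| ^ β i) * Real.exp (-(ν₂ * euclNorm η ^ (2*s)))) := by ring
      _ ≤ _ := by
          exact mul_le_mul P1 P2 (by positivity) (le_trans (by positivity) P1)
  -- Step 5: rewrite the right-hand side
  have r1 : ((ν₁/n) ^ (-(1/(2*s)))) ^ N = E₀ ^ N * t ^ (-(1 + 1/(2*s)) * (N:ℝ)) := by
    have e1 : ν₁/n = (κ/n) * t ^ ((1:ℝ)+2*s) := by rw [hν₁def]; ring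
    rw [e1, Real.mul_rpow (by positivity) (by positivity), mul_pow, hE₀def]
    congr 1
    rw [← Real.rpow_natCast ((t ^ ((1:ℝ)+2*s)) ^ (-(1/(2*s)))) N,
      ← Real.rpow_mul (by positivity), ← Real.rpow_mul ht.le]
    congr 1
    field_simp
    ring
  have r2 : ((ν₂/n) ^ (-(1/(2*s)))) ^ M = E₀ ^ M * t ^ (-((M:ℝ)/(2*s))) := by
    have e1 : ν₂/n = (κ/n) * t := by rw [hν₂def]; ring
    rw [e1, Real.mul_rpow (by positivity) ht.le, mul_pow, hE₀def]
    congr 1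
    rw [← Real.rpow_natCast (t ^ (-(1/(2*s)))) M, ← Real.rpow_mul ht.le]
    congr 1
    ring
  refine le_trans step4 ?_
  rw [r1, r2]
  have tcomb : t ^ (-(1 + 1/(2*s)) * (N:ℝ)) * t ^ (-((M:ℝ)/(2*s)))
      = t ^ (-((1 + 1/(2*s)) * (N:ℝ) + (M:ℝ)/(2*s))) := by
    rw [← Real.rpow_add ht]
    congr 1
    ring
  have cbound : (E₀ * Dconst s) ^ (N + M) ≤ c ^ (N + M) :=
    pow_le_pow_left₀ (by positivity) (le_max_right _ _) _
  calc E₀ ^ N * t ^ (-(1 + 1/(2*s)) * (N:ℝ)) * (Dconst s) ^ N *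
        (∏ i, ((α i).factorial : ℝ)) ^ (1/(2*s)) *
        (E₀ ^ M * t ^ (-((M:ℝ)/(2*s))) * (Dconst s) ^ M *
        (∏ i, ((β i).factorial : ℝ)) ^ (1/(2*s)))
      = (E₀ * Dconst s) ^ (N + M) *
        (t ^ (-(1 + 1/(2*s)) * (N:ℝ)) * t ^ (-((M:ℝ)/(2*s)))) *
        (∏ i, ((α i).factorial : ℝ)) ^ (1/(2*s)) *
        (∏ i, ((β i).factorial : ℝ)) ^ (1/(2*s)) := by
        rw [pow_add, mul_pow, mul_pow]
        ring
    _ ≤ c ^ (N + M) * t ^ (-((1 + 1/(2*s)) * (N:ℝ) + (M:ℝ)/(2*s))) *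
        (∏ i, ((α i).factorial : ℝ)) ^ (1/(2*s)) *
        (∏ i, ((β i).factorial : ℝ)) ^ (1/(2*s)) := by
        rw [tcomb]
        have hrest : (0:ℝ) ≤ t ^ (-((1 + 1/(2*s)) * (N:ℝ) + (M:ℝ)/(2*s))) :=
          (Real.rpow_pos_of_pos ht _).le
        refine mul_le_mul_of_nonneg_right (mul_le_mul_of_nonneg_right
          (mul_le_mul_of_nonneg_right cbound hrest) (by positivity)) (by positivity)
end

section
/- Assume that B is nilpotent of order K ≥ 1, i.e. B^K = 0 and B^{K−1} ≠ 0. Then there exists a constant c₀ > 0 such that for every t > 0 and every ξ ∈ ℝⁿ, ∫₀¹ |√Q e^{αtBᵀ} ξ|² dα ≥ c₀ Σ_{k=0}^{K−1} t^{2k} |√Q (Bᵀ)^k ξ|². -/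
open Matrix MeasureTheory

lemma integral_sq_poly (K : ℕ) (a : Fin K → ℝ) :
    ∫ α in (0:ℝ)..1, (∑ k, a k * α ^ (k:ℕ)) ^ 2
      = ∑ j, ∑ k, a j * a k * ((j:ℝ) + k + 1)⁻¹ := by
  have h1 : ∀ α : ℝ, (∑ k, a k * α ^ (k:ℕ)) ^ 2
      = ∑ j, ∑ k, (a j * a k) * α ^ ((j:ℕ) + (k:ℕ)) := by
    intro α
    rw [sq, Finset.sum_mul_sum]
    refine Finset.sum_congr rfl fun j _ => Finset.sum_congr rfl fun k _ => ?_
    rw [pow_add]; ring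
  simp only [h1]
  rw [intervalIntegral.integral_finset_sum]
  · refine Finset.sum_congr rfl fun j _ => ?_
    rw [intervalIntegral.integral_finset_sum]
    · refine Finset.sum_congr rfl fun k _ => ?_
      rw [intervalIntegral.integral_const_mul, integral_pow]
      push_cast
      rw [one_pow, zero_pow (by positivity)]
      ring
    · intro k _
      exact (Continuous.intervalIntegrable (by continuity) _ _)
  · intro j _
    exact (Continuous.intervalIntegrable (by continuity) _ _)

lemma poly_nonzero_point {K : ℕ} {a : Fin K → ℝ} (ha : a ≠ 0) :
    ∃ x ∈ Set.Ioo (0:ℝ) 1, (∑ k, a k * x ^ (k:ℕ)) ≠ 0 := by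
  set P : Polynomial ℝ := ∑ k : Fin K, Polynomial.C (a k) * Polynomial.X ^ (k:ℕ) with hP
  have heval : ∀ x : ℝ, P.eval x = ∑ k, a k * x ^ (k:ℕ) := by
    intro x; simp [hP, Polynomial.eval_finset_sum]
  have hPne : P ≠ 0 := by
    obtain ⟨k, hk⟩ : ∃ k, a k ≠ 0 := by
      by_contra h; push_neg at h; exact ha (funext h)
    intro h0
    have : P.coeff (k:ℕ) = a k := by
      rw [hP, Polynomial.finset_sum_coeff]
      rw [Finset.sum_eq_single k]
      · simp
      · intro j _ hj
        simp [Polynomial.coeff_C_mul, Polynomial.coeff_X_pow]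
        intro h
        exact absurd (Fin.ext h.symm) hj
      · simp
    rw [h0] at this; simp at this; exact hk this.symm
  have hfin : {x : ℝ | P.IsRoot x}.Finite := Polynomial.finite_setOf_isRoot hPne
  have hinf : (Set.Ioo (0:ℝ) 1).Infinite := Set.Ioo_infinite (by norm_num)
  obtain ⟨x, hx, hroot⟩ := (hinf.diff hfin).nonempty
  exact ⟨x, hx, by rw [← heval]; exact hroot⟩

lemma hilbert_scalar (K : ℕ) (hK : 1 ≤ K) :
    ∃ c : ℝ, 0 < c ∧ ∀ a : Fin K → ℝ,
      c * ∑ k, a k ^ 2 ≤ ∫ α in (0:ℝ)..1, (∑ k, a k * α ^ (k:ℕ)) ^ 2 := by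
  set Φ : (Fin K → ℝ) → ℝ := fun a => ∑ j, ∑ k, a j * a k * ((j:ℝ) + k + 1)⁻¹ with hΦ
  have hΦcont : Continuous Φ := by
    refine continuous_finset_sum _ fun j _ => continuous_finset_sum _ fun k _ => ?_
    exact ((continuous_apply j).mul (continuous_apply k)).mul continuous_const
  have hΦint : ∀ a : Fin K → ℝ, Φ a = ∫ α in (0:ℝ)..1, (∑ k, a k * α ^ (k:ℕ)) ^ 2 :=
    fun a => (integral_sq_poly K a).symm
  -- positivity of Φ on nonzero vectors
  have hΦpos : ∀ a : Fin K → ℝ, a ≠ 0 → 0 < Φ a := by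
    intro a ha
    rw [hΦint]
    obtain ⟨x₀, hx₀, hpx₀⟩ := poly_nonzero_point ha
    set f : ℝ → ℝ := fun α => (∑ k, a k * α ^ (k:ℕ)) ^ 2 with hf
    have hfc : Continuous f := by continuity
    have hnn : ∀ α, 0 ≤ f α := fun α => sq_nonneg _
    rw [intervalIntegral.integral_pos_iff_support_of_nonneg_ae
      (Filter.Eventually.of_forall hnn) (hfc.intervalIntegrable _ _)]
    refine ⟨by norm_num, ?_⟩
    have hopen : IsOpen (Function.support f ∩ Set.Ioo 0 1) :=
      (hfc.isOpen_support).inter isOpen_Ioo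
    have hne : (Function.support f ∩ Set.Ioo 0 1).Nonempty :=
      ⟨x₀, by simp [Function.mem_support, hf, pow_eq_zero_iff]; exact ⟨hpx₀, hx₀⟩⟩
    calc 0 < volume (Function.support f ∩ Set.Ioo 0 1) := hopen.measure_pos volume hne
      _ ≤ volume (Function.support f ∩ Set.Ioc 0 1) :=
        measure_mono (Set.inter_subset_inter_right _ Set.Ioo_subset_Ioc_self)
  -- compactness
  set S : Set (Fin K → ℝ) := {a | ∑ k, a k ^ 2 = 1} with hS
  have hSc : IsCompact S := by
    have hclosed : IsClosed S := isClosed_eq (by continuity) continuous_const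
    have hsub : S ⊆ Metric.closedBall 0 1 := by
      intro a haS
      rw [Metric.mem_closedBall, dist_zero_right, pi_norm_le_iff_of_nonneg zero_le_one]
      intro i
      rw [Real.norm_eq_abs, abs_le_one_iff_mul_self_le_one, ← sq]
      calc a i ^ 2 ≤ ∑ k, a k ^ 2 :=
            Finset.single_le_sum (fun k _ => sq_nonneg (a k)) (Finset.mem_univ i)
        _ = 1 := haS
    exact (isCompact_closedBall 0 1).of_isClosed_subset hclosed hsub
  have hSne : S.Nonempty := by
    refine ⟨fun i => if i = ⟨0, hK⟩ then 1 else 0, ?_⟩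
    rw [hS, Set.mem_setOf_eq, Finset.sum_eq_single ⟨0, hK⟩] <;> simp +contextual
  obtain ⟨a₀, ha₀S, hmin⟩ := hSc.exists_isMinOn hSne hΦcont.continuousOn
  have ha₀ne : a₀ ≠ 0 := by
    intro h
    have := ha₀S
    rw [hS, Set.mem_setOf_eq, h] at this
    simp at this
  refine ⟨Φ a₀, hΦpos a₀ ha₀ne, fun a => ?_⟩
  rw [← hΦint]
  rcases eq_or_ne a 0 with rfl | hane
  · simp [hΦ]
  · have hsum : 0 < ∑ k, a k ^ 2 := by
      obtain ⟨k, hk⟩ : ∃ k, a k ≠ 0 := by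
        by_contra h; push_neg at h; exact hane (funext h)
      exact Finset.sum_pos' (fun i _ => sq_nonneg _) ⟨k, Finset.mem_univ k, by positivity⟩
    set r : ℝ := Real.sqrt (∑ k, a k ^ 2) with hr
    have hrpos : 0 < r := Real.sqrt_pos.mpr hsum
    have hr2 : r ^ 2 = ∑ k, a k ^ 2 := Real.sq_sqrt hsum.le
    set b : Fin K → ℝ := r⁻¹ • a with hb
    have hbS : b ∈ S := by
      rw [hS, Set.mem_setOf_eq]
      have : ∀ k, b k ^ 2 = r⁻¹ ^ 2 * a k ^ 2 := by intro k; rw [hb]; simp [mul_pow]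
      rw [Finset.sum_congr rfl fun k _ => this k, ← Finset.mul_sum, ← hr2]
      field_simp
    have hΦb : Φ b = r⁻¹ ^ 2 * Φ a := by
      rw [hΦ]
      simp only [Finset.mul_sum]
      refine Finset.sum_congr rfl fun j _ => Finset.sum_congr rfl fun k _ => ?_
      rw [hb]; simp; ring
    have hmb : Φ a₀ ≤ Φ b := hmin hbS
    rw [hΦb] at hmb
    have : Φ a₀ * r ^ 2 ≤ Φ a := by
      rw [← mul_le_mul_iff_of_pos_right (by positivity : (0:ℝ) < r ^ 2)] at hmb
      calc Φ a₀ * r ^ 2 ≤ r⁻¹ ^ 2 * Φ a * r ^ 2 := hmb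
        _ = Φ a := by field_simp
    rw [← hr2]; linarith

lemma hilbert_vec (n K : ℕ) (hK : 1 ≤ K) :
    ∃ c : ℝ, 0 < c ∧ ∀ w : Fin K → Fin n → ℝ,
      c * ∑ k, ∑ i, w k i ^ 2 ≤ ∫ α in (0:ℝ)..1, ∑ i, (∑ k, w k i * α ^ (k:ℕ)) ^ 2 := by
  obtain ⟨c, hc, hineq⟩ := hilbert_scalar K hK
  refine ⟨c, hc, fun w => ?_⟩
  rw [intervalIntegral.integral_finset_sum (fun i _ =>
    (Continuous.intervalIntegrable (by continuity) _ _))]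
  rw [Finset.sum_comm, Finset.mul_sum]
  exact Finset.sum_le_sum fun i _ => hineq (fun k => w k i)

lemma exp_nilp {n K : ℕ} (B : Matrix (Fin n) (Fin n) ℝ) (hnil : Bᵀ ^ K = 0) (c : ℝ) :
    NormedSpace.exp (c • Bᵀ) = ∑ k ∈ Finset.range K, (c ^ k * ((Nat.factorial k : ℝ))⁻¹) • Bᵀ ^ k := by
  rw [NormedSpace.exp_eq_tsum (𝕂 := ℝ)]; simp only []; beta_reduce
  rw [tsum_eq_sum (s := Finset.range K) ?h]
  · refine Finset.sum_congr rfl fun k _ => ?_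
    rw [smul_pow, smul_smul, mul_comm]
  case h =>
    intro m hm
    have hKm : K ≤ m := le_of_not_gt (fun h => hm (Finset.mem_range.mpr h))
    have hz : Bᵀ ^ m = 0 := by
      rw [← Nat.add_sub_cancel' hKm, pow_add, hnil, zero_mul]
    rw [smul_pow, hz, smul_zero, smul_zero]

lemma euclNorm_sq {n : ℕ} (v : Fin n → ℝ) : euclNorm v ^ 2 = ∑ i, v i ^ 2 :=
  Real.sq_sqrt (Finset.sum_nonneg fun i _ => sq_nonneg _)

/-- When `B` is nilpotent of order `K ≥ 1`, there exists `c₀ > 0` such that for every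
`t > 0` and `ξ`, `∫₀¹ |√Q e^{αtBᵀ} ξ|² dα ≥ c₀ Σ_{k=0}^{K−1} t^{2k} |√Q (Bᵀ)^k ξ|²`. -/
theorem statement12 (n : ℕ) (hn : 1 ≤ n)
    (B Q : Matrix (Fin n) (Fin n) ℝ) (hQ : Q.PosSemidef)
    (K : ℕ) (hK : 1 ≤ K) (hnil : B ^ K = 0) (hne : B ^ (K - 1) ≠ 0) :
    ∃ c₀ : ℝ, 0 < c₀ ∧
      ∀ t : ℝ, 0 < t → ∀ ξ : Fin n → ℝ,
        c₀ * ∑ k ∈ Finset.range K,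
            t ^ (2 * k) * euclNorm ((((hQ.1.eigenvectorUnitary : Matrix (Fin n) (Fin n) ℝ) * diagonal (fun i => Real.sqrt (hQ.1.eigenvalues i)) * (star hQ.1.eigenvectorUnitary : Matrix (Fin n) (Fin n) ℝ)) * Bᵀ ^ k).mulVec ξ) ^ 2 ≤
          ∫ α in (0:ℝ)..1,
            euclNorm ((((hQ.1.eigenvectorUnitary : Matrix (Fin n) (Fin n) ℝ) * diagonal (fun i => Real.sqrt (hQ.1.eigenvalues i)) * (star hQ.1.eigenvectorUnitary : Matrix (Fin n) (Fin n) ℝ)) * NormedSpace.exp ((α * t) • Bᵀ)).mulVec ξ) ^ 2 := by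
  obtain ⟨c, hc, hvec⟩ := hilbert_vec n K hK
  set fK : ℝ := ((Nat.factorial (K - 1) : ℝ))⁻¹ with hfK
  have hfKpos : 0 < fK := by positivity
  refine ⟨c * fK ^ 2, by positivity, fun t ht ξ => ?_⟩
  have hBT : Bᵀ ^ K = 0 := by rw [← Matrix.transpose_pow, hnil, Matrix.transpose_zero]
  set sq := ((hQ.1.eigenvectorUnitary : Matrix (Fin n) (Fin n) ℝ) * diagonal (fun i => Real.sqrt (hQ.1.eigenvalues i)) * (star hQ.1.eigenvectorUnitary : Matrix (Fin n) (Fin n) ℝ)) with hsq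
  set wf : ℕ → Fin n → ℝ :=
    fun k i => (t ^ k * ((Nat.factorial k : ℝ))⁻¹) * ((sq * Bᵀ ^ k).mulVec ξ i) with hwf
  set w : Fin K → Fin n → ℝ := fun k => wf (k : ℕ) with hw
  -- the integrand identity
  have hv : ∀ α : ℝ, ∀ i, ((sq * NormedSpace.exp ((α * t) • Bᵀ)).mulVec ξ) i
      = ∑ k : Fin K, w k i * α ^ (k : ℕ) := by
    intro α i
    rw [exp_nilp B hBT (α * t), Matrix.mul_sum]
    simp only [Matrix.mul_smul]
    have hsml : ∀ (M : ℕ → Matrix (Fin n) (Fin n) ℝ),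
        (∑ k ∈ Finset.range K, M k) *ᵥ ξ = ∑ k ∈ Finset.range K, M k *ᵥ ξ := by
      intro M
      induction (Finset.range K) using Finset.induction_on with
      | empty => simp
      | insert _ _ h ih => rw [Finset.sum_insert h, Finset.sum_insert h, Matrix.add_mulVec, ih]
    rw [hsml]
    simp only [Matrix.smul_mulVec]
    rw [Finset.sum_apply]
    rw [hw]
    rw [Fin.sum_univ_eq_sum_range (fun k => wf k i * α ^ k) K]
    refine Finset.sum_congr rfl fun k _ => ?_
    simp only [Pi.smul_apply, smul_eq_mul, hwf]
    rw [mul_pow]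
    ring
  have hint : ∀ α : ℝ, euclNorm ((sq * NormedSpace.exp ((α * t) • Bᵀ)).mulVec ξ) ^ 2
      = ∑ i, (∑ k : Fin K, w k i * α ^ (k : ℕ)) ^ 2 := by
    intro α
    rw [euclNorm_sq]
    exact Finset.sum_congr rfl fun i _ => by rw [hv α i]
  -- sum comparison
  have hsum : ∀ k : ℕ, ∑ i, wf k i ^ 2
      = t ^ (2 * k) * (((Nat.factorial k : ℝ))⁻¹) ^ 2 * euclNorm ((sq * Bᵀ ^ k).mulVec ξ) ^ 2 := by
    intro k
    rw [euclNorm_sq, Finset.mul_sum]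
    refine Finset.sum_congr rfl fun i _ => ?_
    simp only [hwf]
    rw [mul_comm 2 k, pow_mul]
    ring
  calc c * fK ^ 2 * ∑ k ∈ Finset.range K, t ^ (2 * k) * euclNorm ((sq * Bᵀ ^ k).mulVec ξ) ^ 2
      = ∑ k ∈ Finset.range K,
          c * fK ^ 2 * (t ^ (2 * k) * euclNorm ((sq * Bᵀ ^ k).mulVec ξ) ^ 2) := by
        rw [Finset.mul_sum]
    _ ≤ ∑ k ∈ Finset.range K, c * ∑ i, wf k i ^ 2 := by
        refine Finset.sum_le_sum fun k hk => ?_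
        rw [hsum]
        have hkK : k ≤ K - 1 := Nat.le_sub_one_of_lt (Finset.mem_range.mp hk)
        have hfac : (Nat.factorial k : ℝ) ≤ (Nat.factorial (K - 1) : ℝ) := by
          exact_mod_cast Nat.factorial_le hkK
        have hle : fK ≤ ((Nat.factorial k : ℝ))⁻¹ := by
          rw [hfK]
          exact inv_anti₀ (by positivity) hfac
        have h2 : fK ^ 2 ≤ (((Nat.factorial k : ℝ))⁻¹) ^ 2 :=
          pow_le_pow_left₀ hfKpos.le hle 2
        have hE : 0 ≤ t ^ (2 * k) * euclNorm ((sq * Bᵀ ^ k).mulVec ξ) ^ 2 := by positivity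
        calc c * fK ^ 2 * (t ^ (2 * k) * euclNorm ((sq * Bᵀ ^ k).mulVec ξ) ^ 2)
            = c * (fK ^ 2 * (t ^ (2 * k) * euclNorm ((sq * Bᵀ ^ k).mulVec ξ) ^ 2)) := by ring
          _ ≤ c * ((((Nat.factorial k : ℝ))⁻¹) ^ 2
                * (t ^ (2 * k) * euclNorm ((sq * Bᵀ ^ k).mulVec ξ) ^ 2)) :=
              mul_le_mul_of_nonneg_left (mul_le_mul_of_nonneg_right h2 hE) hc.le
          _ = c * (t ^ (2 * k) * (((Nat.factorial k : ℝ))⁻¹) ^ 2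
                * euclNorm ((sq * Bᵀ ^ k).mulVec ξ) ^ 2) := by ring
    _ = c * ∑ k : Fin K, ∑ i, w k i ^ 2 := by
        rw [← Finset.mul_sum, hw, Fin.sum_univ_eq_sum_range (fun k => ∑ i, wf k i ^ 2) K]
    _ ≤ ∫ α in (0:ℝ)..1, ∑ i, (∑ k : Fin K, w k i * α ^ (k : ℕ)) ^ 2 := hvec w
    _ = ∫ α in (0:ℝ)..1,
          euclNorm ((sq * NormedSpace.exp ((α * t) • Bᵀ)).mulVec ξ) ^ 2 := by
        simp only [hint]
end
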